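/- Let q = 2^m and let a, c₁, c₂, c₃, c₄, γ ∈ F_q with a² + a + 1 ≠ 0. The map f(X) = X + aX^q + γ·Tr_{F_{q^3}/F_q}(c₁X + c₂X² + c₃X³ + c₄X^{q+2}) is a permutation of F_{q^3} if and only if one of the following holds: (i) γ(c₃ + c₄) = 0, γc₂ = 0 and a + 1 + γc₁ ≠ 0; (ii) γ(c₃ + c₄) = 0, γc₂ ≠ 0 and a + 1 + γc₁ = 0; (iii) γ(c₃ + c₄) ≠ 0, γ(c₁c₃ + c₁c₄ + c₂²) = (a+1)(c₃ + c₄), and m is odd. -/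

import Mathlib

lemma three_dvd_iff (m : ℕ) : 3 ∣ 2 ^ m - 1 ↔ Even m := by
  have h1 : (1:ℕ) ≤ 2 ^ m := Nat.one_le_two_pow
  rw [← ZMod.natCast_eq_zero_iff]
  rw [Nat.cast_sub h1]
  push_cast
  rw [sub_eq_zero]
  have : (2 : ZMod 3) = -1 := by decide
  rw [this]
  exact neg_one_pow_eq_one_iff_even (by decide)

lemma charTwo_of_card {F : Type*} [Field F] [Fintype F] {m : ℕ}
    (hF : Fintype.card F = 2 ^ m) : CharP F 2 := by
  have hinst : CharP F (ringChar F) := ringChar.charP F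
  obtain ⟨n, hp, hcard⟩ := FiniteField.card F (ringChar F)
  have : ringChar F = 2 := by
    have hdvd : ringChar F ∣ 2 ^ m := by
      rw [← hF, hcard]; exact dvd_pow_self _ n.pos.ne'
    exact (Nat.prime_dvd_prime_iff_eq hp Nat.prime_two).mp (hp.dvd_of_dvd_pow hdvd)
  rwa [this] at hinst

lemma root_iff_even {F : Type*} [Field F] [Fintype F] {m : ℕ} (hm : 0 < m)
    (hF : Fintype.card F = 2 ^ m) : (∃ x : F, x ^ 2 + x + 1 = 0) ↔ Even m := by
  classical
  haveI h2 : CharP F 2 := charTwo_of_card hF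
  have hcardu : Fintype.card Fˣ = 2 ^ m - 1 := by
    rw [Fintype.card_units, hF]
  constructor
  · rintro ⟨x, hx⟩
    have hx1 : x ≠ 1 := by
      rintro rfl
      rw [one_pow, show (1:F)+1+1 = 2+1 by ring, CharTwo.two_eq_zero, zero_add] at hx
      exact one_ne_zero hx
    have hx0 : x ≠ 0 := by rintro rfl; simp at hx
    have hx3 : x ^ 3 = 1 := by
      have h0 : x ^ 3 - 1 = 0 := by
        rw [show x ^ 3 - 1 = (x - 1) * (x ^ 2 + x + 1) by ring, hx, mul_zero]
      exact sub_eq_zero.mp h0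
    -- lift to units
    set ζ : Fˣ := Units.mk0 x hx0 with hζdef
    have hζ3 : ζ ^ 3 = 1 := by
      ext
      simpa [hζdef] using hx3
    have hord : orderOf ζ = 3 := by
      have hdvd : orderOf ζ ∣ 3 := orderOf_dvd_of_pow_eq_one hζ3
      rcases (Nat.prime_three).eq_one_or_self_of_dvd _ hdvd with h | h
      · exfalso
        have := orderOf_eq_one_iff.mp h
        exact hx1 (by simpa [hζdef] using congrArg Units.val this)
      · exact h
    have : (3:ℕ) ∣ 2 ^ m - 1 := by
      rw [← hcardu, ← hord]; exact orderOf_dvd_card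
    exact (three_dvd_iff m).mp this
  · intro hev
    have h3 : (3 : ℕ) ∣ Fintype.card Fˣ := by
      rw [hcardu]; exact (three_dvd_iff m).mpr hev
    obtain ⟨ζ, hζ⟩ := exists_prime_orderOf_dvd_card 3 h3
    have hζ3 : ζ ^ 3 = 1 := by rw [← hζ]; exact pow_orderOf_eq_one ζ
    have hζ1 : ζ ≠ 1 := by
      intro h; rw [h, orderOf_one] at hζ; norm_num at hζ
    refine ⟨(ζ : F), ?_⟩
    have h1 : (ζ : F) ^ 3 = 1 := by
      rw [← Units.val_pow_eq_pow_val, hζ3, Units.val_one]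
    have hne : (ζ : F) - 1 ≠ 0 := by
      rw [sub_ne_zero]
      exact fun h => hζ1 (Units.ext h)
    have : ((ζ : F) - 1) * ((ζ : F) ^ 2 + (ζ : F) + 1) = 0 := by
      rw [show ((ζ:F) - 1) * ((ζ:F)^2 + (ζ:F) + 1) = (ζ:F)^3 - 1 by ring, h1, sub_self]
    exact (mul_eq_zero.mp this).resolve_left hne


lemma sq_surj {F : Type*} [Field F] [Finite F] [CharP F 2] (y : F) : ∃ s : F, s ^ 2 = y := by
  have hinj : Function.Injective (fun s : F => s ^ 2) := by
    intro s t h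
    simp only at h
    have : (s - t) ^ 2 = 0 := by
      rw [sub_sq]
      rw [CharTwo.sub_eq_add] at *
      ring_nf
      rw [h]
      ring_nf
      rw [show (2:F) = 0 from CharTwo.two_eq_zero]
      ring
    have := pow_eq_zero_iff (n := 2) (by norm_num) |>.mp this
    rwa [sub_eq_zero] at this
  exact Finite.injective_iff_surjective.mp hinj y

lemma core {F : Type*} [Field F] [Fintype F] {m : ℕ} (hm : 0 < m)
    (hF : Fintype.card F = 2 ^ m) (A B D : F) :
    (∀ u w : F, u ≠ 0 → A + B * u + D * (w ^ 2 + u * w + u ^ 2) ≠ 0) ↔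
      ((D = 0 ∧ B = 0 ∧ A ≠ 0) ∨ (D = 0 ∧ B ≠ 0 ∧ A = 0) ∨
        (D ≠ 0 ∧ A * D = B ^ 2 ∧ Odd m)) := by
  haveI h2 : CharP F 2 := charTwo_of_card hF
  have hchar : (2 : F) = 0 := CharTwo.two_eq_zero
  by_cases hD : D = 0
  · subst hD
    simp only [zero_mul, add_zero, ne_eq, not_false_eq_true, true_and, false_and, or_false,
      not_true_eq_false, and_false, false_or]
    constructor
    · intro h
      by_cases hB : B = 0
      · left
        exact ⟨hB, by simpa [hB] using h 1 0 one_ne_zero⟩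
      · right
        refine ⟨hB, ?_⟩
        by_contra hA
        refine h (A / B) 0 (div_ne_zero hA hB) ?_
        field_simp
        linear_combination A * hchar
    · rintro (⟨hB, hA⟩ | ⟨hB, hA⟩) <;> intro u w hu
      · simpa [hB] using hA
      · simp only [hA, hB, zero_add]
        exact mul_ne_zero hB hu
  · have key : ∀ u w : F, D * (A + B * u + D * (w ^ 2 + u * w + u ^ 2)) =
        A * D + B * (D * u) + (D * w) ^ 2 + (D * w) * (D * u) + (D * u) ^ 2 := by
      intros; ring
    have hiff : (∀ u w : F, u ≠ 0 → A + B * u + D * (w ^ 2 + u * w + u ^ 2) ≠ 0) ↔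
        (∀ r p : F, r ≠ 0 → A * D + B * r + p ^ 2 + p * r + r ^ 2 ≠ 0) := by
      constructor
      · intro h r p hr heq
        have hu : D⁻¹ * r ≠ 0 := mul_ne_zero (inv_ne_zero hD) hr
        refine h (D⁻¹ * r) (D⁻¹ * p) hu ?_
        have h1 := key (D⁻¹ * r) (D⁻¹ * p)
        rw [mul_inv_cancel_left₀ hD, mul_inv_cancel_left₀ hD, heq] at h1
        exact (mul_eq_zero.mp h1).resolve_left hD
      · intro h u w hu heq
        have h1 := key u w
        rw [heq, mul_zero] at h1
        exact h (D * u) (D * w) (mul_ne_zero hD hu) h1.symm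
    rw [hiff]
    constructor
    · intro h
      have hAD : A * D = B ^ 2 := by
        by_contra hne
        obtain ⟨s, hs⟩ := sq_surj (A * D)
        have hsB : s + B ≠ 0 := by
          intro h0
          apply hne
          rw [← hs, CharTwo.add_eq_iff_eq_add.mp h0, zero_add]
        refine h (s + B) s hsB ?_
        linear_combination 3 * hs + (2 * (A*D) + 2 * s * B + B ^ 2) * hchar
      have hodd : Odd m := by
        rw [← Nat.not_even_iff_odd]
        intro hev
        obtain ⟨x, hx⟩ := (root_iff_even hm hF).mpr hev
        refine h 1 (x + B) one_ne_zero ?_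
        linear_combination hAD + hx + (B ^ 2 + B + x * B) * hchar
      exact Or.inr (Or.inr ⟨hD, hAD, hodd⟩)
    · rintro (⟨h0, -⟩ | ⟨h0, -⟩ | ⟨-, hAD, hodd⟩)
      · exact absurd h0 hD
      · exact absurd h0 hD
      intro r p hr heq
      have hx : ((B + p) / r) ^ 2 + ((B + p) / r) + 1 = 0 := by
        field_simp
        linear_combination heq - hAD + (B * p) * hchar
      exact (Nat.not_even_iff_odd.mpr hodd) ((root_iff_even hm hF).mp ⟨_, hx⟩)

open Polynomial


lemma fixed_range {F E : Type*} [Field F] [Fintype F] [Field E] [Fintype E] [Algebra F E]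
    {q : ℕ} (hq2 : 2 ≤ q) (hF : Fintype.card F = q) (x : E) (hx : x ^ q = x) :
    ∃ b : F, algebraMap F E b = x := by
  classical
  by_contra hcon
  push_neg at hcon
  set P : E[X] := X ^ q - X with hP
  have hdeg : P.natDegree = q := by
    rw [hP, natDegree_sub_eq_left_of_natDegree_lt] <;>
      simp [natDegree_X_pow, natDegree_X]
    omega
  set img : Finset E := Finset.image (algebraMap F E) Finset.univ with himg
  have hximg : x ∉ img := by
    simp only [himg, Finset.mem_image, Finset.mem_univ, true_and]
    rintro ⟨b, hb⟩
    exact hcon b hb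
  have hroots : ∀ y ∈ insert x img, y ∈ P.roots := by
    intro y hy
    have hPne : P ≠ 0 := by
      intro h0
      rw [h0, natDegree_zero] at hdeg
      omega
    rw [mem_roots hPne]
    have hyq : y ^ q = y := by
      rcases Finset.mem_insert.mp hy with rfl | hy
      · exact hx
      · simp only [himg, Finset.mem_image, Finset.mem_univ, true_and] at hy
        obtain ⟨b, rfl⟩ := hy
        rw [← map_pow, ← hF, FiniteField.pow_card]
    simp [hP, IsRoot, hyq]
  have hsub : (insert x img).val ⊆ P.roots := by
    intro y hy
    exact hroots y hy
  have hcard : (insert x img).card ≤ q := hdeg ▸ card_le_degree_of_subset_roots hsub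
  have : img.card = q := by
    rw [himg, Finset.card_image_of_injective _ (algebraMap F E).injective,
      Finset.card_univ, hF]
  rw [Finset.card_insert_of_notMem hximg, this] at hcard
  omega



lemma trace_exists_ne {E : Type*} [Field E] [Fintype E]
    {q : ℕ} (hq2 : 2 ≤ q) (hE : Fintype.card E = q ^ 3) :
    ∃ x : E, x + x ^ q + x ^ q ^ 2 ≠ 0 := by
  classical
  by_contra hcon
  push_neg at hcon
  set P : E[X] := X ^ q ^ 2 + X ^ q + X with hP
  have hdeg : P.natDegree ≤ q ^ 2 := by
    apply natDegree_add_le_of_degree_le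
    · apply natDegree_add_le_of_degree_le <;> simp [natDegree_X_pow]
      exact Nat.le_self_pow two_ne_zero q
    · simp [natDegree_X]
      nlinarith
  have hPne : P ≠ 0 := by
    intro h0
    have h1 : P.coeff 1 = 0 := by rw [h0]; simp
    rw [hP] at h1
    simp only [coeff_add, coeff_X_pow, coeff_X_one] at h1
    have e1 : (1 : ℕ) ≠ q ^ 2 := by nlinarith
    have e2 : (1 : ℕ) ≠ q := by omega
    rw [if_neg (by omega : ¬ (1:ℕ) = q ^ 2), if_neg (by omega : ¬ (1:ℕ) = q)] at h1
    simp at h1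
  have hsub : (Finset.univ : Finset E).val ⊆ P.roots := by
    intro y hy
    rw [Finset.mem_val] at hy
    rw [mem_roots hPne]
    have := hcon y
    simp [hP, IsRoot]
    linear_combination this
  have := card_le_degree_of_subset_roots hsub
  rw [Finset.card_univ, hE] at this
  have := this.trans hdeg
  nlinarith

set_option maxHeartbeats 1000000 in

theorem stmt_9 (m : ℕ) (hm : 0 < m) (q : ℕ) (hq : q = 2 ^ m)
    (F E : Type*) [Field F] [Fintype F] [Field E] [Fintype E] [Algebra F E]
    (hF : Fintype.card F = q) (hE : Fintype.card E = q ^ 3)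
    (Tr : E → E) (hTr : ∀ X, Tr X = X + X ^ q + X ^ q ^ 2)
    (a c₁ c₂ c₃ c₄ γ : F) (ha : a ^ 2 + a + 1 ≠ 0) :
    Function.Bijective
        (fun X : E => X + algebraMap F E a * X ^ q +
          algebraMap F E γ *
            Tr (algebraMap F E c₁ * X + algebraMap F E c₂ * X ^ 2 +
              algebraMap F E c₃ * X ^ 3 + algebraMap F E c₄ * X ^ (q + 2))) ↔
      (γ * (c₃ + c₄) = 0 ∧ γ * c₂ = 0 ∧ a + 1 + γ * c₁ ≠ 0) ∨
      (γ * (c₃ + c₄) = 0 ∧ γ * c₂ ≠ 0 ∧ a + 1 + γ * c₁ = 0) ∨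
      (γ * (c₃ + c₄) ≠ 0 ∧ γ * (c₁ * c₃ + c₁ * c₄ + c₂ ^ 2) = (a + 1) * (c₃ + c₄) ∧
        Odd m) := by
  classical
  have hq2 : 2 ≤ q := by
    rw [hq]
    calc 2 = 2 ^ 1 := (pow_one 2).symm
    _ ≤ 2 ^ m := Nat.pow_le_pow_right (by norm_num) hm
  have hFm : Fintype.card F = 2 ^ m := by rw [hF, hq]
  haveI hcF : CharP F 2 := charTwo_of_card hFm
  haveI hcE : CharP E 2 := charTwo_of_card (m := 3 * m)
    (by rw [hE, hq, ← pow_mul, Nat.mul_comm])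
  haveI : Fact (Nat.Prime 2) := ⟨Nat.prime_two⟩
  have hchE : (2 : E) = 0 := CharTwo.two_eq_zero
  have hchF : (2 : F) = 0 := CharTwo.two_eq_zero
  set s : F →+* E := (algebraMap F E : F →+* E) with hs
  have hsi : Function.Injective s := s.injective
  have hqF : ∀ b : F, b ^ q = b := fun b => by rw [← hF]; exact FiniteField.pow_card b
  have hq3 : ∀ x : E, x ^ q ^ 3 = x := fun x => by rw [← hE]; exact FiniteField.pow_card x
  have phi_add : ∀ x y : E, (x + y) ^ q = x ^ q + y ^ q := fun x y => by
    rw [hq]; exact add_pow_char_pow x y 2 m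
  have phi_alg : ∀ b : F, (s b) ^ q = s b := fun b => by rw [← map_pow, hqF]
  have phi_q2 : ∀ x : E, (x ^ q) ^ q = x ^ q ^ 2 := fun x => by rw [← pow_mul, ← pow_two]
  have phi_q3 : ∀ x : E, (x ^ q ^ 2) ^ q = x := fun x => by
    rw [← pow_mul, ← pow_succ]; exact hq3 x
  have Tfix : ∀ x : E, (Tr x) ^ q = Tr x := by
    intro x
    rw [hTr, phi_add, phi_add, phi_q2, phi_q3]
    ring
  have Tlin : ∀ x y : E, Tr (x + y) = Tr x + Tr y := by
    intro x y
    have phi2_add : (x + y) ^ q ^ 2 = x ^ q ^ 2 + y ^ q ^ 2 := by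
      rw [← phi_q2, phi_add, phi_add, phi_q2, phi_q2]
    rw [hTr, hTr, hTr, phi_add, phi2_add]
    ring
  have Tsmul : ∀ (b : F) (x : E), Tr (s b * x) = s b * Tr x := by
    intro b x
    have h1 : (s b * x) ^ q = s b * x ^ q := by rw [mul_pow, phi_alg]
    have h2 : (s b * x) ^ q ^ 2 = s b * x ^ q ^ 2 := by
      rw [← phi_q2, h1, mul_pow, phi_alg, phi_q2]
    rw [hTr, hTr, h1, h2]
    ring
  have Talg : ∀ b : F, Tr (s b) = s b := by
    intro b
    have h2 : (s b) ^ q ^ 2 = s b := by rw [← phi_q2, phi_alg, phi_alg]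
    rw [hTr, phi_alg, h2]
    linear_combination (s b) * hchE
  have Trq : ∀ x : E, Tr (x ^ q) = Tr x := by
    intro x
    rw [hTr, hTr, phi_q2, pow_right_comm x q (q ^ 2), phi_q3]
    ring
  have Tsq : ∀ x : E, Tr (x ^ 2) = (Tr x) ^ 2 := by
    intro x
    rw [hTr, hTr, pow_right_comm x 2 q, pow_right_comm x 2 (q ^ 2), CharTwo.add_sq,
      CharTwo.add_sq]
  have Tsurj : ∀ wv : F, ∃ X : E, Tr X = s wv := by
    intro wv
    obtain ⟨x₀, hx₀⟩ := trace_exists_ne hq2 hE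
    have hx₀' : Tr x₀ ≠ 0 := by rw [hTr]; exact hx₀
    obtain ⟨e, he⟩ := fixed_range hq2 hF (Tr x₀) (Tfix x₀)
    have he0 : e ≠ 0 := by
      rintro rfl
      rw [map_zero] at he
      exact hx₀' he.symm
    refine ⟨s (wv / e) * x₀, ?_⟩
    rw [Tsmul, ← he, ← map_mul, div_mul_cancel₀ _ he0]
  have solve : ∀ U c : E, c ^ q = c → U + s a * U ^ q = c →
      U ^ q = U ∧ (1 + s a) * U = c := by
    intro U c hc e1
    have e2 : U ^ q + s a * U ^ q ^ 2 = c := by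
      have := congrArg (· ^ q) e1
      rw [phi_add, mul_pow, phi_alg, phi_q2, hc] at this
      exact this
    have e3 : U ^ q ^ 2 + s a * U = c := by
      have := congrArg (· ^ q) e2
      rw [phi_add, mul_pow, phi_alg, phi_q2, phi_q3, hc] at this
      exact this
    have ha' : 1 + s a + (s a) ^ 2 ≠ 0 := by
      have h0 : s (a ^ 2 + a + 1) ≠ 0 := fun h => ha (hsi (by rw [h, map_zero]))
      intro h
      apply h0
      rw [map_add, map_add, map_pow, map_one]
      linear_combination h
    have h4 : (1 + s a + (s a) ^ 2) * ((1 + s a) * U - c) = 0 := by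
      linear_combination e1 - s a * e2 + (s a) ^ 2 * e3 +
        ((s a + (s a) ^ 2) * U - s a * c) * hchE
    have hU1 : (1 + s a) * U = c := by
      exact sub_eq_zero.mp ((mul_eq_zero.mp h4).resolve_left ha')
    refine ⟨?_, hU1⟩
    by_cases ha0 : a = 0
    · have hsa : s a = 0 := by rw [ha0, map_zero]
      have hUc : U = c := by rw [hsa, zero_mul, add_zero] at e1; exact e1
      rw [hUc, hc]
    · have hsa : s a ≠ 0 := fun h => ha0 (hsi (by rw [h, map_zero]))
      have : s a * U ^ q = s a * U := by linear_combination e1 - hU1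
      exact mul_left_cancel₀ hsa this
  set f : E → E := fun X : E => X + s a * X ^ q +
      s γ * Tr (s c₁ * X + s c₂ * X ^ 2 + s c₃ * X ^ 3 + s c₄ * X ^ (q + 2)) with hf
  have ident : ∀ (X : E) (u w : F), Tr X = s w →
      f (X + s u) = f X + s (u * ((1 + a + γ * c₁) + (γ * c₂) * u +
        (γ * (c₃ + c₄)) * (w ^ 2 + u * w + u ^ 2))) := by
    intro X u w hw
    have e2 : (X + s u) ^ 2 = X ^ 2 + s u ^ 2 := CharTwo.add_sq _ _
    have eqq : (X + s u) ^ q = X ^ q + s u := by rw [phi_add, phi_alg]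
    have e3 : (X + s u) ^ 3 = X ^ 3 + s u * X ^ 2 + s u ^ 2 * X + s u ^ 3 := by
      linear_combination (X ^ 2 * s u + X * s u ^ 2) * hchE
    have eq2 : (X + s u) ^ (q + 2) = (X ^ q + s u) * (X ^ 2 + s u ^ 2) := by
      rw [pow_add, eqq, e2]
    have hg : s c₁ * (X + s u) + s c₂ * (X + s u) ^ 2 + s c₃ * (X + s u) ^ 3 +
        s c₄ * (X + s u) ^ (q + 2) =
        (s c₁ * X + s c₂ * X ^ 2 + s c₃ * X ^ 3 + s c₄ * X ^ (q + 2)) +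
        (s (c₁ * u + c₂ * u ^ 2) +
          s c₃ * (s u * X ^ 2 + s u ^ 2 * X + s u ^ 3) +
          s c₄ * (s u ^ 2 * X ^ q + s u * X ^ 2 + s u ^ 3)) := by
      rw [e2, e3, eq2, map_add, map_mul, map_mul, map_pow]
      ring
    have hTrg : Tr (s (c₁ * u + c₂ * u ^ 2) +
          s c₃ * (s u * X ^ 2 + s u ^ 2 * X + s u ^ 3) +
          s c₄ * (s u ^ 2 * X ^ q + s u * X ^ 2 + s u ^ 3)) =
        s (c₁ * u + c₂ * u ^ 2 + c₃ * (u * w ^ 2 + u ^ 2 * w + u ^ 3) +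
          c₄ * (u ^ 2 * w + u * w ^ 2 + u ^ 3)) := by
      rw [Tlin, Tlin, Talg, Tsmul, Tsmul, Tlin, Tlin, Tlin, Tlin]
      have t1 : Tr (s u * X ^ 2) = s u * s w ^ 2 := by rw [Tsmul, Tsq, hw]
      have t2 : Tr (s u ^ 2 * X) = s u ^ 2 * s w := by
        rw [← map_pow, Tsmul, hw]
      have t3 : Tr (s u ^ 3) = s u ^ 3 := by rw [← map_pow, Talg]
      have t4 : Tr (s u ^ 2 * X ^ q) = s u ^ 2 * s w := by
        rw [← map_pow, Tsmul, Trq, hw]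
      rw [t1, t2, t3, t4]
      push_cast [map_add, map_mul, map_pow]
      ring
    simp only [hf]
    rw [hg, Tlin, hTrg, eqq]
    push_cast [map_add, map_mul, map_pow, map_one]
    ring
  -- the injectivity criterion
  rw [← Finite.injective_iff_bijective]
  show Function.Injective f ↔ _
  have main : Function.Injective f ↔ ∀ u w : F, u ≠ 0 →
      (1 + a + γ * c₁) + (γ * c₂) * u + (γ * (c₃ + c₄)) * (w ^ 2 + u * w + u ^ 2) ≠ 0 := by
    constructor
    · intro hinj u w hu heq
      obtain ⟨X, hX⟩ := Tsurj w
      have h0 : f (X + s u) = f X := by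
        rw [ident X u w hX, heq, mul_zero, map_zero, add_zero]
      have h1 : X + s u = X := hinj h0
      have h2 : s u = 0 := by
        have := add_eq_left.mp h1
        exact this
      exact hu (hsi (by rw [h2, map_zero]))
    · intro hcond X Y hXY
      by_contra hne
      set U : E := Y - X with hU
      have hU0 : U ≠ 0 := fun h => hne (by
        have := sub_eq_zero.mp h
        exact this.symm ▸ rfl)
      have hYX : Y = X + U := by rw [hU]; ring
      set c : E := s γ * (Tr (s c₁ * X + s c₂ * X ^ 2 + s c₃ * X ^ 3 + s c₄ * X ^ (q + 2)) +
        Tr (s c₁ * Y + s c₂ * Y ^ 2 + s c₃ * Y ^ 3 + s c₄ * Y ^ (q + 2))) with hcdef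
      have hc : c ^ q = c := by
        rw [hcdef, mul_pow, phi_alg, phi_add, Tfix, Tfix]
      have e0 : U + s a * U ^ q = c := by
        have hXYe : f X = f Y := hXY
        simp only [hf] at hXYe
        have hUq : U ^ q = Y ^ q - X ^ q := by
          rw [hU, CharTwo.sub_eq_add, phi_add, CharTwo.sub_eq_add]
        rw [hcdef, hU, hUq]
        linear_combination hXYe + (Y + s a * Y ^ q - X - s a * X ^ q -
          s γ * Tr (s c₁ * X + s c₂ * X ^ 2 + s c₃ * X ^ 3 + s c₄ * X ^ (q + 2))) * hchE
      obtain ⟨hUq, -⟩ := solve U c hc e0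
      obtain ⟨u, hu⟩ := fixed_range hq2 hF U hUq
      have hu0 : u ≠ 0 := fun h => hU0 (by rw [← hu, h, map_zero])
      obtain ⟨w, hw⟩ := fixed_range hq2 hF (Tr X) (Tfix X)
      have hfy : f Y = f X + s (u * ((1 + a + γ * c₁) + (γ * c₂) * u +
          (γ * (c₃ + c₄)) * (w ^ 2 + u * w + u ^ 2))) := by
        rw [hYX, ← hu]
        exact ident X u w hw.symm
      rw [← hXY, left_eq_add] at hfy
      have : u * ((1 + a + γ * c₁) + (γ * c₂) * u +
          (γ * (c₃ + c₄)) * (w ^ 2 + u * w + u ^ 2)) = 0 := by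
        apply hsi
        rw [hfy, map_zero]
      rcases mul_eq_zero.mp this with h | h
      · exact hu0 h
      · exact hcond u w hu0 h
  rw [main, core hm hFm (1 + a + γ * c₁) (γ * c₂) (γ * (c₃ + c₄))]
  -- translate
  have hA : (1 + a + γ * c₁ ≠ 0) ↔ (a + 1 + γ * c₁ ≠ 0) := by
    rw [show (1 : F) + a + γ * c₁ = a + 1 + γ * c₁ by ring]
  have hA' : (1 + a + γ * c₁ = 0) ↔ (a + 1 + γ * c₁ = 0) := by
    rw [show (1 : F) + a + γ * c₁ = a + 1 + γ * c₁ by ring]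
  constructor
  · rintro (⟨h1, h2, h3⟩ | ⟨h1, h2, h3⟩ | ⟨h1, h2, h3⟩)
    · exact Or.inl ⟨h1, h2, hA.mp h3⟩
    · exact Or.inr (Or.inl ⟨h1, h2, hA'.mp h3⟩)
    · refine Or.inr (Or.inr ⟨h1, ?_, h3⟩)
      have hγ : γ ≠ 0 := fun h => h1 (by rw [h, zero_mul])
      apply mul_left_cancel₀ hγ
      linear_combination h2 + (γ * γ * c₂ ^ 2 - γ * (a + 1) * (c₃ + c₄)) * hchF
  · rintro (⟨h1, h2, h3⟩ | ⟨h1, h2, h3⟩ | ⟨h1, h2, h3⟩)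
    · exact Or.inl ⟨h1, h2, hA.mpr h3⟩
    · exact Or.inr (Or.inl ⟨h1, h2, hA'.mpr h3⟩)
    · refine Or.inr (Or.inr ⟨h1, ?_, h3⟩)
      have hγ : γ ≠ 0 := fun h => h1 (by rw [h, zero_mul])
      have := congrArg (γ * ·) h2
      linear_combination this + (γ * (a + 1) * (c₃ + c₄) - γ * γ * c₂ ^ 2) * hchF
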